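/- arXiv:2206.08868 — 7 statements merged into one kernel-verified Lean document; each statement's English description precedes it below -/
import Mathlib

section
/- If f is convex and the CG-BiO iterates are run with any stepsizes γ_k ∈ [0,1], then for every k ≥ 0, f(x_{k+1}) − f* ≤ (1 − γ_k)(f(x_k) − f*) + (1/2) γ_k² L_f D², where f* = min_{s∈X*_g} f(s). -/
open scoped InnerProductSpace

section Aux

variable {d : ℕ}

private lemma line_hasDerivAt (f : EuclideanSpace ℝ (Fin d) → ℝ)
    (gradf : EuclideanSpace ℝ (Fin d) → EuclideanSpace ℝ (Fin d))
    (hfdiff : ∀ x, HasGradientAt f (gradf x) x)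
    (x y : EuclideanSpace ℝ (Fin d)) (t : ℝ) :
    HasDerivAt (fun t : ℝ => f (x + t • (y - x)))
      ⟪gradf (x + t • (y - x)), y - x⟫_ℝ t := by
  have hline : HasDerivAt (fun t : ℝ => x + t • (y - x)) (y - x) t := by
    simpa using ((hasDerivAt_id t).smul_const (y - x)).const_add x
  have hF := (hfdiff (x + t • (y - x))).hasFDerivAt
  have h := hF.comp_hasDerivAt t hline
  simpa [InnerProductSpace.toDual_apply_apply, Function.comp_def] using h

private lemma line_convexOn (f : EuclideanSpace ℝ (Fin d) → ℝ)
    (hconv : ConvexOn ℝ Set.univ f) (x y : EuclideanSpace ℝ (Fin d)) :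
    ConvexOn ℝ Set.univ (fun t : ℝ => f (x + t • (y - x))) := by
  have h := hconv.comp_affineMap (AffineMap.lineMap x y : ℝ →ᵃ[ℝ] EuclideanSpace ℝ (Fin d))
  have heq : (f ∘ (AffineMap.lineMap x y : ℝ →ᵃ[ℝ] EuclideanSpace ℝ (Fin d)))
      = fun t : ℝ => f (x + t • (y - x)) := by
    funext t
    simp [Function.comp, AffineMap.lineMap_apply_module', add_comm]
  rw [Set.preimage_univ] at h
  rwa [heq] at h

/-- Gradient inequality for convex differentiable functions. -/
private lemma grad_ineq (f : EuclideanSpace ℝ (Fin d) → ℝ)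
    (gradf : EuclideanSpace ℝ (Fin d) → EuclideanSpace ℝ (Fin d))
    (hconv : ConvexOn ℝ Set.univ f)
    (hfdiff : ∀ x, HasGradientAt f (gradf x) x)
    (x y : EuclideanSpace ℝ (Fin d)) :
    f x + ⟪gradf x, y - x⟫_ℝ ≤ f y := by
  have hconvφ := line_convexOn f hconv x y
  have hd : HasDerivAt (fun t : ℝ => f (x + t • (y - x))) ⟪gradf x, y - x⟫_ℝ 0 := by
    have := line_hasDerivAt f gradf hfdiff x y 0
    simpa using this
  have hs := hconvφ.le_slope_of_hasDerivAt (Set.mem_univ (0:ℝ)) (Set.mem_univ (1:ℝ))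
    one_pos hd
  have : slope (fun t : ℝ => f (x + t • (y - x))) 0 1 = f y - f x := by
    simp [slope_def_field]
  rw [this] at hs
  linarith

/-- Descent lemma for `L`-smooth functions. -/
private lemma descent_lemma (f : EuclideanSpace ℝ (Fin d) → ℝ)
    (gradf : EuclideanSpace ℝ (Fin d) → EuclideanSpace ℝ (Fin d))
    (hfdiff : ∀ x, HasGradientAt f (gradf x) x)
    (Lf : ℝ) (hLf : 0 ≤ Lf)
    (hfLip : ∀ x y, ‖gradf x - gradf y‖ ≤ Lf * ‖x - y‖)
    (x y : EuclideanSpace ℝ (Fin d)) :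
    f y ≤ f x + ⟪gradf x, y - x⟫_ℝ + Lf / 2 * ‖y - x‖ ^ 2 := by
  set ψ : ℝ → ℝ := fun t => ⟪gradf (x + t • (y - x)), y - x⟫_ℝ with hψ
  have hgradcont : Continuous gradf := by
    have : LipschitzWith (Real.toNNReal Lf) gradf := by
      apply LipschitzWith.of_dist_le_mul
      intro a b
      simpa [dist_eq_norm, Real.coe_toNNReal _ hLf] using hfLip a b
    exact this.continuous
  have hψcont : Continuous ψ := by
    apply Continuous.inner
    · exact hgradcont.comp (continuous_const.add (continuous_id.smul continuous_const))
    · exact continuous_const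
  have hFTC : (∫ t in (0:ℝ)..1, ψ t)
      = (fun t : ℝ => f (x + t • (y - x))) 1 - (fun t : ℝ => f (x + t • (y - x))) 0 :=
    intervalIntegral.integral_eq_sub_of_hasDerivAt
      (fun t _ => line_hasDerivAt f gradf hfdiff x y t) (hψcont.intervalIntegrable 0 1)
  simp only [one_smul, zero_smul, add_zero, add_sub_cancel] at hFTC
  have hbound : ∀ t ∈ Set.Icc (0:ℝ) 1, ψ t ≤ ψ 0 + (Lf * ‖y - x‖ ^ 2) * t := by
    intro t ht
    have key : ψ t - ψ 0 = ⟪gradf (x + t • (y - x)) - gradf x, y - x⟫_ℝ := by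
      simp [hψ, inner_sub_left]
    have h2 : ⟪gradf (x + t • (y - x)) - gradf x, y - x⟫_ℝ
        ≤ ‖gradf (x + t • (y - x)) - gradf x‖ * ‖y - x‖ := real_inner_le_norm _ _
    have h3 : ‖gradf (x + t • (y - x)) - gradf x‖ ≤ Lf * (t * ‖y - x‖) := by
      have := hfLip (x + t • (y - x)) x
      simpa [norm_smul, abs_of_nonneg ht.1] using this
    have h4 : ‖gradf (x + t • (y - x)) - gradf x‖ * ‖y - x‖
        ≤ Lf * (t * ‖y - x‖) * ‖y - x‖ :=
      mul_le_mul_of_nonneg_right h3 (norm_nonneg _)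
    nlinarith [key, h2, h4]
  have hintle : (∫ t in (0:ℝ)..1, ψ t) ≤ ∫ t in (0:ℝ)..1, (ψ 0 + (Lf * ‖y - x‖ ^ 2) * t) := by
    apply intervalIntegral.integral_mono_on zero_le_one
    · exact hψcont.intervalIntegrable 0 1
    · exact (continuous_const.add (continuous_const.mul continuous_id)).intervalIntegrable 0 1
    · exact hbound
  have hrhs : (∫ t in (0:ℝ)..1, (ψ 0 + (Lf * ‖y - x‖ ^ 2) * t)) = ψ 0 + Lf / 2 * ‖y - x‖ ^ 2 := by
    rw [intervalIntegral.integral_add (f := fun _ => ψ 0) (g := fun t : ℝ => (Lf * ‖y - x‖ ^ 2) * t) (intervalIntegrable_const)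
      ((continuous_const.mul continuous_id' : Continuous fun t : ℝ => (Lf * ‖y - x‖ ^ 2) * t).intervalIntegrable 0 1),
      intervalIntegral.integral_const, intervalIntegral.integral_const_mul,
      integral_id]
    simp only [sub_zero, one_smul, smul_eq_mul, one_mul]
    ring
  have hψ0 : ψ 0 = ⟪gradf x, y - x⟫_ℝ := by simp [hψ]
  rw [hrhs, hψ0] at hintle
  linarith [hFTC ▸ hintle]

end Aux

/-- For convex `f` and CG-BiO iterates with stepsizes `γ_k ∈ [0,1]`,
`f(x_{k+1}) − f* ≤ (1 − γ_k)(f(x_k) − f*) + (1/2)γ_k² L_f D²`,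
where `f* = min_{s∈X*_g} f(s)`. -/
theorem statement5 {d : ℕ} (Z : Set (EuclideanSpace ℝ (Fin d)))
    (hZne : Z.Nonempty) (hZcomp : IsCompact Z) (hZconv : Convex ℝ Z)
    (D : ℝ) (hD : ∀ x ∈ Z, ∀ y ∈ Z, ‖x - y‖ ≤ D)
    (f g : EuclideanSpace ℝ (Fin d) → ℝ)
    (gradf gradg : EuclideanSpace ℝ (Fin d) → EuclideanSpace ℝ (Fin d))
    (hfconv : ConvexOn ℝ Set.univ f)
    (hfdiff : ∀ x, HasGradientAt f (gradf x) x)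
    (Lf : ℝ) (hLf : 0 ≤ Lf)
    (hfLip : ∀ x y, ‖gradf x - gradf y‖ ≤ Lf * ‖x - y‖)
    (hgconv : ConvexOn ℝ Set.univ g)
    (hgdiff : ∀ x, HasGradientAt g (gradg x) x)
    (x s : ℕ → EuclideanSpace ℝ (Fin d)) (γ : ℕ → ℝ)
    (hγ : ∀ k, γ k ∈ Set.Icc (0:ℝ) 1)
    (hx0 : x 0 ∈ Z)
    (hsmem : ∀ k, s k ∈ Z ∧ ⟪gradg (x k), s k - x k⟫_ℝ ≤ g (x 0) - g (x k))
    (hsmin : ∀ k, ∀ s' ∈ Z, ⟪gradg (x k), s' - x k⟫_ℝ ≤ g (x 0) - g (x k) →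
      ⟪gradf (x k), s k⟫_ℝ ≤ ⟪gradf (x k), s'⟫_ℝ)
    (hupd : ∀ k, x (k + 1) = (1 - γ k) • x k + γ k • s k)
    (k : ℕ) :
    f (x (k + 1)) - sInf (f '' {z | z ∈ Z ∧ IsMinOn g Z z}) ≤
      (1 - γ k) * (f (x k) - sInf (f '' {z | z ∈ Z ∧ IsMinOn g Z z}))
        + (1/2) * (γ k)^2 * Lf * D^2 := by
  -- continuity of f and g
  have hfcont : Continuous f := by
    apply continuous_iff_continuousAt.2
    intro z; exact (hfdiff z).hasFDerivAt.differentiableAt.continuousAt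
  have hgcont : Continuous g := by
    apply continuous_iff_continuousAt.2
    intro z; exact (hgdiff z).hasFDerivAt.differentiableAt.continuousAt
  -- the set of g-minimizers
  set Xg : Set (EuclideanSpace ℝ (Fin d)) := {z | z ∈ Z ∧ IsMinOn g Z z} with hXg
  obtain ⟨zg, hzgZ, hzgmin⟩ := hZcomp.exists_isMinOn hZne hgcont.continuousOn
  have hXgne : Xg.Nonempty := ⟨zg, hzgZ, hzgmin⟩
  have hXgcomp : IsCompact Xg := by
    have : Xg = Z ∩ ⋂ y ∈ Z, {z | g z ≤ g y} := by
      ext z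
      simp only [hXg, Set.mem_setOf_eq, Set.mem_inter_iff, Set.mem_iInter, IsMinOn, IsMinFilter,
        Set.mem_setOf_eq]
      constructor
      · rintro ⟨hz, hmin⟩
        exact ⟨hz, fun y hy => hmin hy⟩
      · rintro ⟨hz, hmin⟩
        exact ⟨hz, fun y hy => hmin y hy⟩
    rw [this]
    apply hZcomp.inter_right
    exact isClosed_biInter fun y _ => isClosed_le hgcont continuous_const
  obtain ⟨xs, hxsXg, hxsmin⟩ := hXgcomp.exists_isMinOn hXgne hfcont.continuousOn
  -- f* = f xs
  have hfstar : sInf (f '' Xg) = f xs := by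
    apply IsGLB.csInf_eq _ (hXgne.image f)
    constructor
    · rintro _ ⟨z, hz, rfl⟩; exact hxsmin hz
    · intro b hb; exact hb ⟨xs, hxsXg, rfl⟩
  -- x k ∈ Z for all k
  have hxZ : ∀ k, x k ∈ Z := by
    intro k
    induction k with
    | zero => exact hx0
    | succ n ih =>
      rw [hupd n]
      exact hZconv ih (hsmem n).1 (by linarith [(hγ n).2]) (hγ n).1 (by ring)
  -- feasibility of xs in the linearized subproblem at step k
  have hxsZ : xs ∈ Z := hxsXg.1
  have hfeas : ⟪gradg (x k), xs - x k⟫_ℝ ≤ g (x 0) - g (x k) := by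
    have h1 := grad_ineq g gradg hgconv hgdiff (x k) xs
    have h2 : g xs ≤ g (x 0) := hxsXg.2 hx0
    linarith
  have hkey : ⟪gradf (x k), s k⟫_ℝ ≤ ⟪gradf (x k), xs⟫_ℝ := hsmin k xs hxsZ hfeas
  -- descent step
  have hstep : x (k+1) - x k = γ k • (s k - x k) := by
    rw [hupd k]
    module
  have hdesc := descent_lemma f gradf hfdiff Lf hLf hfLip (x k) (x (k+1))
  rw [hstep] at hdesc
  have hinner : ⟪gradf (x k), γ k • (s k - x k)⟫_ℝ = γ k * ⟪gradf (x k), s k - x k⟫_ℝ :=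
    real_inner_smul_right _ _ _
  have hconvf := grad_ineq f gradf hfconv hfdiff (x k) xs
  have hinnerle : ⟪gradf (x k), s k - x k⟫_ℝ ≤ f xs - f (x k) := by
    have : ⟪gradf (x k), s k - x k⟫_ℝ ≤ ⟪gradf (x k), xs - x k⟫_ℝ := by
      rw [inner_sub_right, inner_sub_right]
      linarith
    linarith
  have hnorm : ‖s k - x k‖ ≤ D := hD _ (hsmem k).1 _ (hxZ k)
  have hnormsq : ‖γ k • (s k - x k)‖ ^ 2 ≤ (γ k)^2 * D^2 := by
    rw [norm_smul]
    have hγk := (hγ k).1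
    have hn := norm_nonneg (s k - x k)
    have : ‖γ k‖ = γ k := abs_of_nonneg hγk
    rw [this, mul_pow]
    have h1 : ‖s k - x k‖ ^ 2 ≤ D ^ 2 := by nlinarith
    exact mul_le_mul_of_nonneg_left h1 (sq_nonneg _)
  have hγk := (hγ k).1
  rw [hfstar]
  rw [hinner] at hdesc
  nlinarith [mul_le_mul_of_nonneg_left hinnerle hγk,
    mul_le_mul_of_nonneg_left hnormsq (by positivity : (0:ℝ) ≤ Lf / 2)]
end

section
/- If the CG-BiO iterates are run with any stepsizes γ_k ∈ [0,1], then for every k ≥ 0, g(x_{k+1}) − g(x_0) ≤ (1 − γ_k)(g(x_k) − g(x_0)) + (1/2) γ_k² L_g D². -/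
open scoped InnerProductSpace

lemma descent_aux {d : ℕ} (g : EuclideanSpace ℝ (Fin d) → ℝ)
    (gradg : EuclideanSpace ℝ (Fin d) → EuclideanSpace ℝ (Fin d))
    (hgdiff : ∀ x, HasGradientAt g (gradg x) x)
    (Lg : ℝ) (a b : EuclideanSpace ℝ (Fin d))
    (hLip : ∀ t ∈ Set.Icc (0:ℝ) 1,
      ‖gradg (a + t • (b - a)) - gradg a‖ ≤ Lg * ‖t • (b - a)‖) :
    g b ≤ g a + ⟪gradg a, b - a⟫_ℝ + Lg / 2 * ‖b - a‖ ^ 2 := by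
  set v := b - a with hv
  set C := Lg * ‖v‖ ^ 2 with hC
  set χ : ℝ → ℝ := fun t => g (a + t • v) - t * ⟪gradg a, v⟫_ℝ - C / 2 * t ^ 2 with hχ
  have hline : ∀ t : ℝ, HasDerivAt (fun t : ℝ => a + t • v) v t := by
    intro t
    simpa using ((hasDerivAt_id t).smul_const v).const_add a
  have hderiv : ∀ t : ℝ, HasDerivAt χ
      (⟪gradg (a + t • v), v⟫_ℝ - ⟪gradg a, v⟫_ℝ - C * t) t := by
    intro t
    have h1 : HasDerivAt (fun t : ℝ => g (a + t • v)) (⟪gradg (a + t • v), v⟫_ℝ) t := by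
      have := ((hgdiff (a + t • v)).hasFDerivAt).comp_hasDerivAt t (hline t)
      exact this
    have h2 : HasDerivAt (fun t : ℝ => t * ⟪gradg a, v⟫_ℝ) (⟪gradg a, v⟫_ℝ) t := by
      simpa using (hasDerivAt_id t).mul_const (⟪gradg a, v⟫_ℝ)
    have h3 : HasDerivAt (fun t : ℝ => C / 2 * t ^ 2) (C * t) t := by
      have := (hasDerivAt_pow 2 t).const_mul (C / 2)
      refine this.congr_deriv ?_
      rw [show (2:ℕ) - 1 = 1 from rfl, pow_one]; push_cast; ring
    exact (h1.sub h2).sub h3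
  have hanti : AntitoneOn χ (Set.Icc (0:ℝ) 1) := by
    apply antitoneOn_of_deriv_nonpos (convex_Icc 0 1)
    · exact fun t _ => (hderiv t).continuousAt.continuousWithinAt
    · intro t ht
      exact ((hderiv t).differentiableAt).differentiableWithinAt
    · intro t ht
      rw [interior_Icc] at ht
      rw [(hderiv t).deriv]
      have hL : ‖gradg (a + t • v) - gradg a‖ ≤ Lg * ‖t • v‖ :=
        hLip t ⟨le_of_lt ht.1, le_of_lt ht.2⟩
      have hinner : ⟪gradg (a + t • v), v⟫_ℝ - ⟪gradg a, v⟫_ℝ ≤ C * t := by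
        have h1 : ⟪gradg (a + t • v) - gradg a, v⟫_ℝ ≤ ‖gradg (a + t • v) - gradg a‖ * ‖v‖ :=
          real_inner_le_norm _ _
        have h2 : ‖gradg (a + t • v) - gradg a‖ * ‖v‖ ≤ Lg * ‖t • v‖ * ‖v‖ :=
          mul_le_mul_of_nonneg_right hL (norm_nonneg _)
        have h3 : Lg * ‖t • v‖ * ‖v‖ = Lg * |t| * ‖v‖ ^ 2 := by
          rw [norm_smul]; simp [Real.norm_eq_abs]; ring
        have h4 : |t| = t := abs_of_pos ht.1
        have := (h1.trans h2)
        rw [h3, h4] at this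
        rw [inner_sub_left] at this
        calc ⟪gradg (a + t • v), v⟫_ℝ - ⟪gradg a, v⟫_ℝ ≤ Lg * t * ‖v‖ ^ 2 := this
          _ = C * t := by rw [hC]; ring
      linarith
  have h01 := hanti (Set.left_mem_Icc.2 zero_le_one) (Set.right_mem_Icc.2 zero_le_one) zero_le_one
  have hχ0 : χ 0 = g a := by simp [hχ]
  have hχ1 : χ 1 = g b - ⟪gradg a, v⟫_ℝ - C / 2 := by
    simp [hχ, hv]
  rw [hχ0, hχ1] at h01
  have : g b ≤ g a + ⟪gradg a, v⟫_ℝ + C / 2 := by linarith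
  calc g b ≤ g a + ⟪gradg a, v⟫_ℝ + C / 2 := this
    _ = g a + ⟪gradg a, b - a⟫_ℝ + Lg / 2 * ‖b - a‖ ^ 2 := by rw [hC, hv]; ring

/-- For CG-BiO iterates with stepsizes `γ_k ∈ [0,1]`,
`g(x_{k+1}) − g(x_0) ≤ (1 − γ_k)(g(x_k) − g(x_0)) + (1/2)γ_k² L_g D²`. -/
theorem statement6 {d : ℕ} (Z : Set (EuclideanSpace ℝ (Fin d)))
    (hZne : Z.Nonempty) (hZcomp : IsCompact Z) (hZconv : Convex ℝ Z)
    (D : ℝ) (hD : ∀ x ∈ Z, ∀ y ∈ Z, ‖x - y‖ ≤ D)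
    (f g : EuclideanSpace ℝ (Fin d) → ℝ)
    (gradf gradg : EuclideanSpace ℝ (Fin d) → EuclideanSpace ℝ (Fin d))
    (hfdiff : ∀ x, HasGradientAt f (gradf x) x)
    (hgconv : ConvexOn ℝ Set.univ g)
    (hgdiff : ∀ x, HasGradientAt g (gradg x) x)
    (Lg : ℝ) (hLg : 0 ≤ Lg)
    (hgLip : ∀ x ∈ Z, ∀ y ∈ Z, ‖gradg x - gradg y‖ ≤ Lg * ‖x - y‖)
    (x s : ℕ → EuclideanSpace ℝ (Fin d)) (γ : ℕ → ℝ)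
    (hγ : ∀ k, γ k ∈ Set.Icc (0:ℝ) 1)
    (hx0 : x 0 ∈ Z)
    (hsmem : ∀ k, s k ∈ Z ∧ ⟪gradg (x k), s k - x k⟫_ℝ ≤ g (x 0) - g (x k))
    (hsmin : ∀ k, ∀ s' ∈ Z, ⟪gradg (x k), s' - x k⟫_ℝ ≤ g (x 0) - g (x k) →
      ⟪gradf (x k), s k⟫_ℝ ≤ ⟪gradf (x k), s'⟫_ℝ)
    (hupd : ∀ k, x (k + 1) = (1 - γ k) • x k + γ k • s k)
    (k : ℕ) :
    g (x (k + 1)) - g (x 0) ≤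
      (1 - γ k) * (g (x k) - g (x 0)) + (1/2) * (γ k)^2 * Lg * D^2 := by
  -- all iterates stay in Z
  have hxZ : ∀ n, x n ∈ Z := by
    intro n
    induction n with
    | zero => exact hx0
    | succ n ih =>
      rw [hupd n]
      exact hZconv ih (hsmem n).1 (by linarith [(hγ n).2]) (hγ n).1 (by ring)
  obtain ⟨hγ0, hγ1⟩ := hγ k
  set a := x k
  set b := x (k + 1)
  have hb : b = a + γ k • (s k - a) := by
    show x (k+1) = _
    rw [hupd k]
    module
  have hvD : ‖s k - a‖ ≤ D := by
    have := hD (s k) (hsmem k).1 a (hxZ k)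
    simpa using this
  have hDnn : 0 ≤ D := le_trans (norm_nonneg _) hvD
  -- Lipschitz along segment
  have hLip : ∀ t ∈ Set.Icc (0:ℝ) 1,
      ‖gradg (a + t • (b - a)) - gradg a‖ ≤ Lg * ‖t • (b - a)‖ := by
    intro t ht
    have hmem : a + t • (b - a) ∈ Z := by
      have : a + t • (b - a) = (1 - t) • a + t • b := by module
      rw [this]
      exact hZconv (hxZ k) (hxZ (k+1)) (by linarith [ht.2]) ht.1 (by ring)
    have := hgLip _ hmem a (hxZ k)
    simpa using this
  have hdesc := descent_aux g gradg hgdiff Lg a b hLip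
  -- bound inner product
  have hba : b - a = γ k • (s k - a) := by rw [hb]; module
  have hinner : ⟪gradg a, b - a⟫_ℝ ≤ γ k * (g (x 0) - g a) := by
    rw [hba, real_inner_smul_right]
    exact mul_le_mul_of_nonneg_left (hsmem k).2 hγ0
  have hnorm : ‖b - a‖ ^ 2 ≤ (γ k)^2 * D^2 := by
    rw [hba, norm_smul, Real.norm_eq_abs, abs_of_nonneg hγ0, mul_pow]
    exact mul_le_mul_of_nonneg_left
      (pow_le_pow_left₀ (norm_nonneg _) hvD 2) (sq_nonneg _)
  have hfin : Lg / 2 * ‖b - a‖ ^ 2 ≤ Lg / 2 * ((γ k)^2 * D^2) :=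
    mul_le_mul_of_nonneg_left hnorm (by linarith)
  have : g b ≤ g a + γ k * (g (x 0) - g a) + Lg / 2 * ((γ k)^2 * D^2) := by
    linarith
  nlinarith [this]
end

section
/- Suppose f is convex and the CG-BiO iterates are run with stepsizes γ_k = 2/(k+2). Then for every K ≥ 1, f(x_K) − f* ≤ 2 L_f D²/(K+1) and g(x_K) − g* ≤ 2 L_g D²/(K+1) + ε_g/2. -/
open scoped InnerProductSpace

lemma gradIneq {d : ℕ} {f : EuclideanSpace ℝ (Fin d) → ℝ}
    {gradf : EuclideanSpace ℝ (Fin d) → EuclideanSpace ℝ (Fin d)}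
    (hconv : ConvexOn ℝ Set.univ f)
    (hdiff : ∀ p, HasGradientAt f (gradf p) p)
    (x y : EuclideanSpace ℝ (Fin d)) :
    f x + ⟪gradf x, y - x⟫_ℝ ≤ f y := by
  set c : ℝ → EuclideanSpace ℝ (Fin d) := fun t => x + t • (y - x) with hc
  have hcd : ∀ t : ℝ, HasDerivAt c (y - x) t := fun t => by
    exact ((hasDerivAt_const t x).add ((hasDerivAt_id t).smul_const (y - x))).congr_deriv (by simp)
  have hc0 : c 0 = x := by simp [hc]
  have hφ : HasDerivAt (f ∘ c) ⟪gradf x, y - x⟫_ℝ 0 := by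
    have h := ((hdiff (c 0)).hasFDerivAt.comp_hasDerivAt 0 (hcd 0))
    rw [hc0] at h
    simpa [InnerProductSpace.toDual_apply_apply] using h
  have hslope : Filter.Tendsto (slope (f ∘ c) 0) (nhdsWithin 0 (Set.Ioi 0))
      (nhds ⟪gradf x, y - x⟫_ℝ) :=
    (hasDerivAt_iff_tendsto_slope.mp hφ).mono_left
      (nhdsWithin_mono 0 (fun t ht => ne_of_gt ht))
  have hev : ∀ᶠ t in nhdsWithin (0:ℝ) (Set.Ioi 0), slope (f ∘ c) 0 t ≤ f y - f x := by
    filter_upwards [Ioc_mem_nhdsGT_of_mem (by norm_num : (0:ℝ) ∈ Set.Ico 0 1)] with t ht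
    obtain ⟨ht0, ht1⟩ := ht
    have hco : c t = (1 - t) • x + t • y := by
      show x + t • (y - x) = (1 - t) • x + t • y
      module
    have hcf : f (c t) ≤ (1 - t) * f x + t * f y := by
      rw [hco]
      exact hconv.2 (Set.mem_univ x) (Set.mem_univ y) (by linarith) (le_of_lt ht0) (by ring)
    have hsl : slope (f ∘ c) 0 t = (f (c t) - f x) / t := by
      rw [slope_def_field]
      simp [hc0]
    rw [hsl, div_le_iff₀ ht0]
    nlinarith [hcf]
  have := le_of_tendsto hslope hev
  linarith
lemma descentLemma {d : ℕ} {f : EuclideanSpace ℝ (Fin d) → ℝ}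
    {gradf : EuclideanSpace ℝ (Fin d) → EuclideanSpace ℝ (Fin d)}
    (hdiff : ∀ p, HasGradientAt f (gradf p) p)
    {L : ℝ} (x y : EuclideanSpace ℝ (Fin d))
    (hlip : ∀ t ∈ Set.Icc (0:ℝ) 1,
      ‖gradf (x + t • (y - x)) - gradf x‖ ≤ L * (t * ‖y - x‖)) :
    f y ≤ f x + ⟪gradf x, y - x⟫_ℝ + L / 2 * ‖y - x‖ ^ 2 := by
  set c : ℝ → EuclideanSpace ℝ (Fin d) := fun t => x + t • (y - x) with hc
  have hcd : ∀ t : ℝ, HasDerivAt c (y - x) t := fun t => by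
    exact ((hasDerivAt_const t x).add ((hasDerivAt_id t).smul_const (y - x))).congr_deriv (by simp)
  set A : ℝ := ⟪gradf x, y - x⟫_ℝ with hA
  set B : ℝ := L / 2 * ‖y - x‖ ^ 2 with hB
  set h : ℝ → ℝ := fun t => f (c t) - t * A - t ^ 2 * B with hh
  have hψ : ∀ t, HasDerivAt (fun u => f (c u)) ⟪gradf (c t), y - x⟫_ℝ t := fun t => by
    have h := (hdiff (c t)).hasFDerivAt.comp_hasDerivAt t (hcd t)
    simp [InnerProductSpace.toDual_apply_apply] at h
    exact h
  have hhd : ∀ t, HasDerivAt h (⟪gradf (c t), y - x⟫_ℝ - A - 2 * t * B) t := fun t => by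
    have h1 : HasDerivAt (fun u : ℝ => u * A) A t := by
      simpa using (hasDerivAt_id t).mul_const A
    have h2 : HasDerivAt (fun u : ℝ => u ^ 2 * B) (2 * t * B) t := by
      have := (hasDerivAt_pow 2 t).mul_const B
      simpa [mul_comm, mul_assoc, mul_left_comm] using this
    exact ((hψ t).sub h1).sub h2
  have hmono : AntitoneOn h (Set.Icc 0 1) := by
    apply antitoneOn_of_deriv_nonpos (convex_Icc 0 1)
    · exact (continuous_iff_continuousAt.mpr fun t => (hhd t).continuousAt).continuousOn
    · exact fun t _ => (hhd t).differentiableAt.differentiableWithinAt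
    · intro t ht
      rw [interior_Icc] at ht
      rw [(hhd t).deriv]
      have hts : ‖gradf (c t) - gradf x‖ ≤ L * (t * ‖y - x‖) :=
        hlip t ⟨le_of_lt ht.1, le_of_lt ht.2⟩
      have hinner : ⟪gradf (c t), y - x⟫_ℝ - A ≤ ‖gradf (c t) - gradf x‖ * ‖y - x‖ := by
        have h3 := real_inner_le_norm (gradf (c t) - gradf x) (y - x)
        rw [inner_sub_left] at h3
        rw [hA]; linarith
      have h4 : ‖gradf (c t) - gradf x‖ * ‖y - x‖ ≤ L * (t * ‖y - x‖) * ‖y - x‖ :=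
        mul_le_mul_of_nonneg_right hts (norm_nonneg _)
      have h5 : L * (t * ‖y - x‖) * ‖y - x‖ = 2 * t * B := by rw [hB]; ring
      linarith
  have h01 : h 1 ≤ h 0 := hmono (Set.left_mem_Icc.2 zero_le_one)
    (Set.right_mem_Icc.2 zero_le_one) zero_le_one
  have hc1 : c 1 = y := by simp [hc]
  have hc0 : c 0 = x := by simp [hc]
  rw [hh] at h01
  simp only [hc1, hc0] at h01
  simp only [one_mul, one_pow, mul_zero, zero_mul, sub_zero, pow_two] at h01
  rw [hA, hB] at h01
  nlinarith [h01]

lemma fwRate (h : ℕ → ℝ) (C : ℝ) (hC : 0 ≤ C)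
    (hrec : ∀ k : ℕ, h (k + 1) ≤ (1 - 2 / ((k : ℝ) + 2)) * h k + (2 / ((k : ℝ) + 2)) ^ 2 * C) :
    ∀ K : ℕ, 1 ≤ K → h K ≤ 4 * C / ((K : ℝ) + 1) := by
  intro K hK
  induction K, hK using Nat.le_induction with
  | base =>
    have := hrec 0
    norm_num at this ⊢
    linarith
  | succ k hk ih =>
    have hrk := hrec k
    have hn : (0:ℝ) ≤ (k:ℝ) := Nat.cast_nonneg k
    have h1 : (0:ℝ) < (k:ℝ) + 1 := by linarith
    have h2 : (0:ℝ) < (k:ℝ) + 2 := by linarith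
    have hγ : (0:ℝ) ≤ 1 - 2 / ((k:ℝ) + 2) := by
      rw [sub_nonneg, div_le_one h2]; linarith
    have step : (1 - 2 / ((k:ℝ) + 2)) * h k ≤ (1 - 2 / ((k:ℝ) + 2)) * (4 * C / ((k:ℝ) + 1)) :=
      mul_le_mul_of_nonneg_left ih hγ
    have key : (1 - 2 / ((k:ℝ) + 2)) * (4 * C / ((k:ℝ) + 1)) + (2 / ((k:ℝ) + 2)) ^ 2 * C
        ≤ 4 * C / ((k:ℝ) + 2) := by
      rw [← sub_nonneg]
      have e : 4 * C / ((k:ℝ) + 2) - ((1 - 2 / ((k:ℝ) + 2)) * (4 * C / ((k:ℝ) + 1))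
          + (2 / ((k:ℝ) + 2)) ^ 2 * C) = 4 * C / (((k:ℝ) + 1) * ((k:ℝ) + 2) ^ 2) := by
        field_simp
        ring
      rw [e]
      positivity
    push_cast
    have : ((k:ℝ) + 1) + 1 = (k:ℝ) + 2 := by ring
    rw [this]
    linarith

/-- **Theorem 1, convex upper level.** For convex `f` and CG-BiO iterates
with stepsizes `γ_k = 2/(k+2)` started at `x_0` with `g(x_0) − g* ≤ ε_g/2`,
`f(x_K) − f* ≤ 2L_f D²/(K+1)` and `g(x_K) − g* ≤ 2L_g D²/(K+1) + ε_g/2` for all `K ≥ 1`. -/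
theorem statement8 {d : ℕ} (Z : Set (EuclideanSpace ℝ (Fin d)))
    (hZne : Z.Nonempty) (hZcomp : IsCompact Z) (hZconv : Convex ℝ Z)
    (D : ℝ) (hD : ∀ x ∈ Z, ∀ y ∈ Z, ‖x - y‖ ≤ D)
    (f g : EuclideanSpace ℝ (Fin d) → ℝ)
    (gradf gradg : EuclideanSpace ℝ (Fin d) → EuclideanSpace ℝ (Fin d))
    (hfconv : ConvexOn ℝ Set.univ f)
    (hfdiff : ∀ x, HasGradientAt f (gradf x) x)
    (Lf : ℝ) (hLf : 0 ≤ Lf)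
    (hfLip : ∀ x y, ‖gradf x - gradf y‖ ≤ Lf * ‖x - y‖)
    (hgconv : ConvexOn ℝ Set.univ g)
    (hgdiff : ∀ x, HasGradientAt g (gradg x) x)
    (Lg : ℝ) (hLg : 0 ≤ Lg)
    (hgLip : ∀ x ∈ Z, ∀ y ∈ Z, ‖gradg x - gradg y‖ ≤ Lg * ‖x - y‖)
    (εg : ℝ) (hεg : 0 < εg)
    (x s : ℕ → EuclideanSpace ℝ (Fin d)) (γ : ℕ → ℝ)
    (hγ : ∀ k, γ k = 2 / ((k : ℝ) + 2))
    (hx0 : x 0 ∈ Z) (hx0init : g (x 0) - sInf (g '' Z) ≤ εg / 2)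
    (hsmem : ∀ k, s k ∈ Z ∧ ⟪gradg (x k), s k - x k⟫_ℝ ≤ g (x 0) - g (x k))
    (hsmin : ∀ k, ∀ s' ∈ Z, ⟪gradg (x k), s' - x k⟫_ℝ ≤ g (x 0) - g (x k) →
      ⟪gradf (x k), s k⟫_ℝ ≤ ⟪gradf (x k), s'⟫_ℝ)
    (hupd : ∀ k, x (k + 1) = (1 - γ k) • x k + γ k • s k)
    (K : ℕ) (hK : 1 ≤ K) :
    f (x K) - sInf (f '' {z | z ∈ Z ∧ IsMinOn g Z z}) ≤ 2 * Lf * D^2 / ((K : ℝ) + 1) ∧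
      g (x K) - sInf (g '' Z) ≤ 2 * Lg * D^2 / ((K : ℝ) + 1) + εg / 2 := by
  -- basic facts
  have hD0 : 0 ≤ D := by
    obtain ⟨z, hz⟩ := hZne
    have := hD z hz z hz
    simpa using this
  have hγ0 : ∀ k, 0 ≤ γ k := fun k => by
    rw [hγ k]; positivity
  have hγ1 : ∀ k, γ k ≤ 1 := fun k => by
    rw [hγ k, div_le_one (by positivity)]
    have : (0:ℝ) ≤ (k:ℝ) := Nat.cast_nonneg k
    linarith
  -- iterates stay in Z
  have hxZ : ∀ k, x k ∈ Z := by
    intro k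
    induction k with
    | zero => exact hx0
    | succ k ih =>
      rw [hupd k]
      exact hZconv ih (hsmem k).1 (by linarith [hγ1 k]) (hγ0 k) (by ring)
  -- continuity
  have hgcont : Continuous g :=
    continuous_iff_continuousAt.mpr fun z => (hgdiff z).hasFDerivAt.continuousAt
  have hfcont : Continuous f :=
    continuous_iff_continuousAt.mpr fun z => (hfdiff z).hasFDerivAt.continuousAt
  -- the set S of g-minimizers over Z
  set S : Set (EuclideanSpace ℝ (Fin d)) := {z | z ∈ Z ∧ IsMinOn g Z z} with hS
  obtain ⟨zs, hzsZ, hzsmin⟩ := hZcomp.exists_isMinOn hZne hgcont.continuousOn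
  have hSne : S.Nonempty := ⟨zs, hzsZ, hzsmin⟩
  have hScomp : IsCompact S := by
    have hSeq : S = Z ∩ ⋂ w ∈ Z, {z | g z ≤ g w} := by
      ext z
      simp [hS, isMinOn_iff, Set.mem_iInter]
    rw [hSeq]
    exact hZcomp.inter_right (isClosed_biInter fun w _ =>
      isClosed_le hgcont continuous_const)
  obtain ⟨xs, hxsS, hxsmin⟩ := hScomp.exists_isMinOn hSne hfcont.continuousOn
  have hxsZ : xs ∈ Z := hxsS.1
  have hxsgmin : IsMinOn g Z xs := hxsS.2
  -- f xs ≤ sInf (f '' S)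
  have hfsinf : f xs ≤ sInf (f '' S) := by
    apply le_csInf (hSne.image f)
    rintro b ⟨z, hz, rfl⟩
    exact hxsmin hz
  -- step bound pieces, shared
  have hdiffk : ∀ k, x (k + 1) - x k = γ k • (s k - x k) := fun k => by
    rw [hupd k]; module
  have hnrm : ∀ k, ‖x (k + 1) - x k‖ ≤ γ k * D := fun k => by
    rw [hdiffk k, norm_smul, Real.norm_eq_abs, abs_of_nonneg (hγ0 k)]
    exact mul_le_mul_of_nonneg_left (hD (s k) (hsmem k).1 (x k) (hxZ k)) (hγ0 k)
  have hsq : ∀ k, ‖x (k + 1) - x k‖ ^ 2 ≤ (γ k) ^ 2 * D ^ 2 := fun k => by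
    have h1 := hnrm k
    have h2 := norm_nonneg (x (k + 1) - x k)
    nlinarith
  -- f recursion
  have hstepf : ∀ k, f (x (k + 1)) - f xs ≤
      (1 - γ k) * (f (x k) - f xs) + (γ k) ^ 2 * (Lf * D ^ 2 / 2) := by
    intro k
    have hd : f (x (k + 1)) ≤ f (x k) + ⟪gradf (x k), x (k + 1) - x k⟫_ℝ
        + Lf / 2 * ‖x (k + 1) - x k‖ ^ 2 := by
      apply descentLemma hfdiff
      intro t ht
      calc ‖gradf (x k + t • (x (k + 1) - x k)) - gradf (x k)‖
          ≤ Lf * ‖x k + t • (x (k + 1) - x k) - x k‖ := hfLip _ _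
        _ = Lf * (t * ‖x (k + 1) - x k‖) := by
            rw [add_sub_cancel_left, norm_smul, Real.norm_eq_abs, abs_of_nonneg ht.1]
    rw [hdiffk k, real_inner_smul_right] at hd
    -- feasibility of xs for the subproblem
    have hfeas : ⟪gradg (x k), xs - x k⟫_ℝ ≤ g (x 0) - g (x k) := by
      have h1 := gradIneq hgconv hgdiff (x k) xs
      have h2 : g xs ≤ g (x 0) := hxsgmin hx0
      linarith
    have hmin := hsmin k xs hxsZ hfeas
    have hfx : ⟪gradf (x k), s k - x k⟫_ℝ ≤ f xs - f (x k) := by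
      have h1 := gradIneq hfconv hfdiff (x k) xs
      have h2 : ⟪gradf (x k), s k - x k⟫_ℝ ≤ ⟪gradf (x k), xs - x k⟫_ℝ := by
        rw [inner_sub_right, inner_sub_right]
        linarith
      linarith
    have p1 : γ k * ⟪gradf (x k), s k - x k⟫_ℝ ≤ γ k * (f xs - f (x k)) :=
      mul_le_mul_of_nonneg_left hfx (hγ0 k)
    have p2 : Lf / 2 * ‖x (k + 1) - x k‖ ^ 2 ≤ Lf / 2 * ((γ k) ^ 2 * D ^ 2) :=
      mul_le_mul_of_nonneg_left (hsq k) (by linarith)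
    rw [hdiffk k, norm_smul] at p2
    have hd2 : f (x (k + 1)) ≤ f (x k) + γ k * (f xs - f (x k))
        + Lf / 2 * ((γ k) ^ 2 * D ^ 2) := by
      have := hsq k
      rw [hdiffk k] at this
      nlinarith [hd, p1]
    nlinarith [hd2]
  -- g recursion
  have hstepg : ∀ k, g (x (k + 1)) - g (x 0) ≤
      (1 - γ k) * (g (x k) - g (x 0)) + (γ k) ^ 2 * (Lg * D ^ 2 / 2) := by
    intro k
    have hd : g (x (k + 1)) ≤ g (x k) + ⟪gradg (x k), x (k + 1) - x k⟫_ℝ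
        + Lg / 2 * ‖x (k + 1) - x k‖ ^ 2 := by
      apply descentLemma hgdiff
      intro t ht
      have hmem : x k + t • (x (k + 1) - x k) ∈ Z := by
        have : x k + t • (x (k + 1) - x k) = (1 - t) • x k + t • x (k + 1) := by module
        rw [this]
        exact hZconv (hxZ k) (hxZ (k + 1)) (by linarith [ht.2]) ht.1 (by ring)
      calc ‖gradg (x k + t • (x (k + 1) - x k)) - gradg (x k)‖
          ≤ Lg * ‖x k + t • (x (k + 1) - x k) - x k‖ := hgLip _ hmem _ (hxZ k)
        _ = Lg * (t * ‖x (k + 1) - x k‖) := by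
            rw [add_sub_cancel_left, norm_smul, Real.norm_eq_abs, abs_of_nonneg ht.1]
    rw [hdiffk k, real_inner_smul_right] at hd
    have p1 : γ k * ⟪gradg (x k), s k - x k⟫_ℝ ≤ γ k * (g (x 0) - g (x k)) :=
      mul_le_mul_of_nonneg_left (hsmem k).2 (hγ0 k)
    have hd2 : g (x (k + 1)) ≤ g (x k) + γ k * (g (x 0) - g (x k))
        + Lg / 2 * ((γ k) ^ 2 * D ^ 2) := by
      have := hsq k
      rw [hdiffk k] at this
      nlinarith [hd, p1]
    nlinarith [hd2]
  -- apply the rate lemma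
  have hCf : (0:ℝ) ≤ Lf * D ^ 2 / 2 := by positivity
  have hCg : (0:ℝ) ≤ Lg * D ^ 2 / 2 := by positivity
  have hratef := fwRate (fun k => f (x k) - f xs) (Lf * D ^ 2 / 2) hCf
    (fun k => by have := hstepf k; rw [hγ k] at this; exact this) K hK
  have hrateg := fwRate (fun k => g (x k) - g (x 0)) (Lg * D ^ 2 / 2) hCg
    (fun k => by have := hstepg k; rw [hγ k] at this; exact this) K hK
  constructor
  · have e : 4 * (Lf * D ^ 2 / 2) / ((K:ℝ) + 1) = 2 * Lf * D ^ 2 / ((K:ℝ) + 1) := by ring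
    rw [e] at hratef
    linarith
  · have e : 4 * (Lg * D ^ 2 / 2) / ((K:ℝ) + 1) = 2 * Lg * D ^ 2 / ((K:ℝ) + 1) := by ring
    rw [e] at hrateg
    linarith
end

section
/- Suppose the CG-BiO iterates are run with a constant stepsize γ ∈ (0,1]. Then for every K ≥ 1, min_{0 ≤ k ≤ K−1} G(x_k) ≤ (f(x_0) − f̲)/(γ K) + (1/2) γ L_f D², where f̲ = min_{x∈Z} f(x) and G(x) = max_{s∈X*_g} ⟨∇f(x), x − s⟩ is the Frank–Wolfe gap. -/
open scoped InnerProductSpace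

section Helpers

variable {F : Type*} [NormedAddCommGroup F] [InnerProductSpace ℝ F] [CompleteSpace F]

private lemma line_hasDerivAt_s9 (x v : F) (t : ℝ) :
    HasDerivAt (fun t : ℝ => x + t • v) v t := by
  simpa using ((hasDerivAt_id t).smul_const v).const_add x

private lemma comp_line_hasDerivAt {f : F → ℝ} {gf : F → F}
    (hf : ∀ u, HasGradientAt f (gf u) u) (x v : F) (t : ℝ) :
    HasDerivAt (fun t : ℝ => f (x + t • v)) ⟪gf (x + t • v), v⟫_ℝ t := by
  have h1 := (hf (x + t • v)).hasFDerivAt.comp_hasDerivAt t (line_hasDerivAt_s9 x v t)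
  simp at h1
  exact h1

private lemma convex_subgrad {g : F → ℝ} {gg : F → F} (hgconv : ConvexOn ℝ Set.univ g)
    (hg : ∀ u, HasGradientAt g (gg u) u) (x y : F) :
    ⟪gg x, y - x⟫_ℝ ≤ g y - g x := by
  set v := y - x with hv
  set φ : ℝ → ℝ := fun t => g (x + t • v) with hφ
  have hconv : ConvexOn ℝ Set.univ φ := by
    refine ⟨convex_univ, fun a _ b _ p q hp hq hpq => ?_⟩
    have key : x + (p • a + q • b) • v = p • (x + a • v) + q • (x + b • v) := by
      match_scalars <;> simp <;> linarith
    simp only [hφ]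
    rw [key]
    exact hgconv.2 (Set.mem_univ _) (Set.mem_univ _) hp hq hpq
  have hder : HasDerivAt φ ⟪gg x, v⟫_ℝ 0 := by
    have := comp_line_hasDerivAt hg x v 0
    simpa using this
  have h := hconv.le_slope_of_hasDerivAt (Set.mem_univ (0:ℝ)) (Set.mem_univ 1) zero_lt_one hder
  have hφ0 : φ 0 = g x := by simp [hφ]
  have hφ1 : φ 1 = g y := by simp [hφ, hv]
  rw [slope_def_field, hφ0, hφ1] at h
  simpa using h

private lemma descent_lemma_s9 {f : F → ℝ} {gf : F → F}
    (hf : ∀ u, HasGradientAt f (gf u) u)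
    {L : ℝ} (hL : 0 ≤ L) (hLip : ∀ a b, ‖gf a - gf b‖ ≤ L * ‖a - b‖) (x y : F) :
    f y ≤ f x + ⟪gf x, y - x⟫_ℝ + L / 2 * ‖y - x‖ ^ 2 := by
  set v := y - x with hv
  set ψ : ℝ → ℝ := fun t => L * ‖v‖ ^ 2 / 2 * t ^ 2 - f (x + t • v) with hψ
  have hder : ∀ t, HasDerivAt ψ (L * ‖v‖ ^ 2 * t - ⟪gf (x + t • v), v⟫_ℝ) t := by
    intro t
    have h1 : HasDerivAt (fun t : ℝ => L * ‖v‖ ^ 2 / 2 * t ^ 2) (L * ‖v‖ ^ 2 * t) t := by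
      have := (hasDerivAt_pow 2 t).const_mul (L * ‖v‖ ^ 2 / 2)
      convert this using 1
      · rfl
      · rfl
      · ring
    exact h1.sub (comp_line_hasDerivAt hf x v t)
  have hdiff : Differentiable ℝ ψ := fun t => (hder t).differentiableAt
  have hderiv : deriv ψ = fun t => L * ‖v‖ ^ 2 * t - ⟪gf (x + t • v), v⟫_ℝ :=
    funext fun t => (hder t).deriv
  have hmono : Monotone (deriv ψ) := by
    rw [hderiv]
    intro a b hab
    simp only
    have h2 : ⟪gf (x + b • v) - gf (x + a • v), v⟫_ℝ ≤ L * (b - a) * ‖v‖ ^ 2 := by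
      calc ⟪gf (x + b • v) - gf (x + a • v), v⟫_ℝ
          ≤ ‖gf (x + b • v) - gf (x + a • v)‖ * ‖v‖ := real_inner_le_norm _ _
        _ ≤ (L * ‖(x + b • v) - (x + a • v)‖) * ‖v‖ := by
            have := hLip (x + b • v) (x + a • v)
            have hnn : (0:ℝ) ≤ ‖v‖ := norm_nonneg _
            nlinarith
        _ = L * (b - a) * ‖v‖ ^ 2 := by
            have heq : (x + b • v) - (x + a • v) = (b - a) • v := by module
            rw [heq, norm_smul, Real.norm_eq_abs, abs_of_nonneg (by linarith : (0:ℝ) ≤ b - a)]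
            ring
    have h3 : ⟪gf (x + b • v), v⟫_ℝ - ⟪gf (x + a • v), v⟫_ℝ ≤ L * (b - a) * ‖v‖ ^ 2 := by
      rw [← inner_sub_left]; exact h2
    nlinarith
  have hconv := hmono.convexOn_univ_of_deriv hdiff
  have h := hconv.le_slope_of_hasDerivAt (Set.mem_univ (0:ℝ)) (Set.mem_univ 1) zero_lt_one (hder 0)
  have hψ0 : ψ 0 = -f x := by simp [hψ]
  have hψ1 : ψ 1 = L * ‖v‖ ^ 2 / 2 - f y := by simp [hψ, hv]
  rw [slope_def_field, hψ0, hψ1] at h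
  simp only [mul_zero, zero_sub, sub_zero, div_one] at h
  have hx0 : x + (0:ℝ) • v = x := by simp
  rw [hx0] at h
  nlinarith [h]

end Helpers

/-- For CG-BiO iterates with constant stepsize `γ ∈ (0,1]`,
`min_{0≤k≤K−1} G(x_k) ≤ (f(x_0) − f̲)/(γK) + (1/2)γ L_f D²` for every `K ≥ 1`,
where `f̲ = min_{x∈Z} f(x)` and `G(x) = max_{s∈X*_g} ⟨∇f(x), x − s⟩`. -/
theorem statement9 {d : ℕ} (Z : Set (EuclideanSpace ℝ (Fin d)))
    (hZne : Z.Nonempty) (hZcomp : IsCompact Z) (hZconv : Convex ℝ Z)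
    (D : ℝ) (hD : ∀ x ∈ Z, ∀ y ∈ Z, ‖x - y‖ ≤ D)
    (f g : EuclideanSpace ℝ (Fin d) → ℝ)
    (gradf gradg : EuclideanSpace ℝ (Fin d) → EuclideanSpace ℝ (Fin d))
    (hfdiff : ∀ x, HasGradientAt f (gradf x) x)
    (Lf : ℝ) (hLf : 0 ≤ Lf)
    (hfLip : ∀ x y, ‖gradf x - gradf y‖ ≤ Lf * ‖x - y‖)
    (hgconv : ConvexOn ℝ Set.univ g)
    (hgdiff : ∀ x, HasGradientAt g (gradg x) x)
    (γ : ℝ) (hγ0 : 0 < γ) (hγ1 : γ ≤ 1)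
    (x s : ℕ → EuclideanSpace ℝ (Fin d))
    (hx0 : x 0 ∈ Z)
    (hsmem : ∀ k, s k ∈ Z ∧ ⟪gradg (x k), s k - x k⟫_ℝ ≤ g (x 0) - g (x k))
    (hsmin : ∀ k, ∀ s' ∈ Z, ⟪gradg (x k), s' - x k⟫_ℝ ≤ g (x 0) - g (x k) →
      ⟪gradf (x k), s k⟫_ℝ ≤ ⟪gradf (x k), s'⟫_ℝ)
    (hupd : ∀ k, x (k + 1) = (1 - γ) • x k + γ • s k)
    (K : ℕ) (hK : 1 ≤ K) :
    ∃ k < K, sSup ((fun s' => ⟪gradf (x k), x k - s'⟫_ℝ) '' {z | z ∈ Z ∧ IsMinOn g Z z}) ≤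
      (f (x 0) - sInf (f '' Z)) / (γ * K) + (1/2) * γ * Lf * D^2 := by
  classical
  have hgcont : Continuous g :=
    continuous_iff_continuousAt.2 fun u => (hgdiff u).differentiableAt.continuousAt
  have hfcont : Continuous f :=
    continuous_iff_continuousAt.2 fun u => (hfdiff u).differentiableAt.continuousAt
  obtain ⟨zm, hzmZ, hzmmin⟩ := hZcomp.exists_isMinOn hZne hgcont.continuousOn
  have hxZ : ∀ k, x k ∈ Z := by
    intro k
    induction k with
    | zero => exact hx0
    | succ k ih =>
      rw [hupd k]
      exact hZconv ih (hsmem k).1 (by linarith) (le_of_lt hγ0) (by ring)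
  have hD0 : 0 ≤ D := le_trans (norm_nonneg _) (hD _ hx0 _ hx0)
  set G : ℕ → ℝ := fun k =>
    sSup ((fun s' => ⟪gradf (x k), x k - s'⟫_ℝ) '' {z | z ∈ Z ∧ IsMinOn g Z z}) with hGdef
  have hGle : ∀ k, G k ≤ ⟪gradf (x k), x k - s k⟫_ℝ := by
    intro k
    refine csSup_le ⟨_, ⟨zm, ⟨hzmZ, hzmmin⟩, rfl⟩⟩ ?_
    rintro _ ⟨z, ⟨hzZ, hzmin⟩, rfl⟩
    have h1 : ⟪gradg (x k), z - x k⟫_ℝ ≤ g (x 0) - g (x k) := by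
      have h2 := convex_subgrad hgconv hgdiff (x k) z
      have h3 : g z ≤ g (x 0) := hzmin hx0
      linarith
    have h4 := hsmin k z hzZ h1
    simp only [inner_sub_right] at *
    linarith
  have hdesc : ∀ k, γ * G k ≤ f (x k) - f (x (k + 1)) + γ ^ 2 * Lf / 2 * D ^ 2 := by
    intro k
    have h1 := descent_lemma_s9 hfdiff hLf hfLip (x k) (x (k + 1))
    have h2 : x (k + 1) - x k = γ • (s k - x k) := by rw [hupd k]; module
    rw [h2] at h1
    have h3 : ⟪gradf (x k), γ • (s k - x k)⟫_ℝ = -(γ * ⟪gradf (x k), x k - s k⟫_ℝ) := by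
      rw [real_inner_smul_right, inner_sub_right, inner_sub_right]
      ring
    have h4 : ‖γ • (s k - x k)‖ ^ 2 ≤ γ ^ 2 * D ^ 2 := by
      rw [norm_smul, Real.norm_eq_abs, abs_of_pos hγ0, mul_pow]
      gcongr
      exact hD _ (hsmem k).1 _ (hxZ k)
    have h6 := hGle k
    rw [h3] at h1
    nlinarith [hγ0.le, mul_le_mul_of_nonneg_left h4 (by positivity : (0:ℝ) ≤ Lf / 2),
      mul_le_mul_of_nonneg_left h6 hγ0.le]
  have hsum : γ * ∑ k ∈ Finset.range K, G k ≤
      f (x 0) - f (x K) + K * (γ ^ 2 * Lf / 2 * D ^ 2) := by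
    calc γ * ∑ k ∈ Finset.range K, G k = ∑ k ∈ Finset.range K, γ * G k := Finset.mul_sum _ _ _
      _ ≤ ∑ k ∈ Finset.range K, (f (x k) - f (x (k + 1)) + γ ^ 2 * Lf / 2 * D ^ 2) :=
          Finset.sum_le_sum fun k _ => hdesc k
      _ = f (x 0) - f (x K) + K * (γ ^ 2 * Lf / 2 * D ^ 2) := by
          rw [Finset.sum_add_distrib, Finset.sum_range_sub' (fun k => f (x k)),
            Finset.sum_const, Finset.card_range, nsmul_eq_mul]
  have hinf : sInf (f '' Z) ≤ f (x K) :=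
    csInf_le (hZcomp.image hfcont).bddBelow ⟨x K, hxZ K, rfl⟩
  by_contra hcon
  push_neg at hcon
  set B := (f (x 0) - sInf (f '' Z)) / (γ * K) + (1/2) * γ * Lf * D ^ 2 with hB
  clear_value B
  have hlt : ∀ k ∈ Finset.range K, B < G k := fun k hk => hcon k (Finset.mem_range.1 hk)
  have hsumlt : (K : ℝ) * B < ∑ k ∈ Finset.range K, G k := by
    have := Finset.sum_lt_sum_of_nonempty (Finset.nonempty_range_iff.2 (by omega)) hlt
    simpa [Finset.sum_const, Finset.card_range, nsmul_eq_mul] using this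
  have hK0 : (0:ℝ) < K := by exact_mod_cast Nat.lt_of_lt_of_le Nat.zero_lt_one hK
  have hKB : γ * ((K : ℝ) * B) =
      (f (x 0) - sInf (f '' Z)) + K * (γ ^ 2 * Lf / 2 * D ^ 2) := by
    rw [hB]
    field_simp
  have hfinal := mul_lt_mul_of_pos_left hsumlt hγ0
  have hcontr : γ * ((K : ℝ) * B) < γ * ((K : ℝ) * B) := by
    calc γ * ((K : ℝ) * B) < γ * ∑ k ∈ Finset.range K, G k := hfinal
      _ ≤ f (x 0) - f (x K) + K * (γ ^ 2 * Lf / 2 * D ^ 2) := hsum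
      _ ≤ f (x 0) - sInf (f '' Z) + K * (γ ^ 2 * Lf / 2 * D ^ 2) := by linarith
      _ = γ * ((K : ℝ) * B) := hKB.symm
  exact lt_irrefl _ hcontr
end

section
/- Suppose the CG-BiO iterates are run with a constant stepsize γ ∈ (0,1]. Then for every k ≥ 0, g(x_k) − g(x_0) ≤ (1/2) L_g D² γ. In particular, if additionally g(x_0) − g* ≤ ε_g/2 and γ ≤ ε_g/(L_g D²), then g(x_k) − g* ≤ ε_g for all k ≥ 0. -/
open scoped InnerProductSpace

/-- Descent lemma along a segment on which the gradient increment is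
controlled linearly. -/
lemma descent_lemma_s10 {d : ℕ} (g : EuclideanSpace ℝ (Fin d) → ℝ)
    (gradg : EuclideanSpace ℝ (Fin d) → EuclideanSpace ℝ (Fin d))
    (hgdiff : ∀ x, HasGradientAt g (gradg x) x)
    (Lg : ℝ) (a b : EuclideanSpace ℝ (Fin d))
    (hab : ∀ t ∈ Set.Icc (0:ℝ) 1,
      ‖gradg (a + t • (b - a)) - gradg a‖ ≤ Lg * ‖t • (b - a)‖) :
    g b ≤ g a + ⟪gradg a, b - a⟫_ℝ + Lg / 2 * ‖b - a‖ ^ 2 := by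
  set v := b - a with hv
  have hφ : ∀ t : ℝ, HasDerivAt (fun t : ℝ => g (a + t • v))
      ⟪gradg (a + t • v), v⟫_ℝ t := by
    intro t
    have h1 : HasDerivAt (fun t : ℝ => a + t • v) v t := by
      simpa using ((hasDerivAt_id t).smul_const v).const_add a
    have h2 := (hgdiff (a + t • v)).hasFDerivAt.comp_hasDerivAt t h1
    simpa [InnerProductSpace.toDual_apply_apply, Function.comp_def] using h2
  set ψ : ℝ → ℝ := fun t =>
    Lg * ‖v‖ ^ 2 * t ^ 2 / 2 + ⟪gradg a, v⟫_ℝ * t - g (a + t • v) with hψdef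
  have hψ : ∀ t : ℝ, HasDerivAt ψ
      (Lg * ‖v‖ ^ 2 * t + ⟪gradg a, v⟫_ℝ - ⟪gradg (a + t • v), v⟫_ℝ) t := by
    intro t
    have h2 : HasDerivAt (fun t : ℝ => Lg * ‖v‖ ^ 2 * t ^ 2 / 2)
        (Lg * ‖v‖ ^ 2 * t) t := by
      have := (hasDerivAt_pow 2 t).const_mul (Lg * ‖v‖ ^ 2 / 2)
      convert this using 1
      · rfl
      · rfl
      · funext u; ring
      · ring
    have h3 : HasDerivAt (fun t : ℝ => ⟪gradg a, v⟫_ℝ * t)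
        ⟪gradg a, v⟫_ℝ t := by
      simpa using (hasDerivAt_id t).const_mul ⟪gradg a, v⟫_ℝ
    exact (h2.add h3).sub (hφ t)
  have hmono : MonotoneOn ψ (Set.Icc (0:ℝ) 1) := by
    apply monotoneOn_of_deriv_nonneg (convex_Icc 0 1)
    · exact fun t _ => ((hψ t).continuousAt).continuousWithinAt
    · exact fun t _ => ((hψ t).differentiableAt).differentiableWithinAt
    · intro t ht
      rw [interior_Icc] at ht
      rw [(hψ t).deriv]
      have ht' : t ∈ Set.Icc (0:ℝ) 1 := ⟨le_of_lt ht.1, le_of_lt ht.2⟩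
      have h4 : ⟪gradg (a + t • v) - gradg a, v⟫_ℝ ≤ Lg * ‖v‖ ^ 2 * t := by
        calc ⟪gradg (a + t • v) - gradg a, v⟫_ℝ
            ≤ ‖gradg (a + t • v) - gradg a‖ * ‖v‖ := real_inner_le_norm _ _
          _ ≤ (Lg * ‖t • v‖) * ‖v‖ := by
              apply mul_le_mul_of_nonneg_right (hab t ht') (norm_nonneg _)
          _ = Lg * ‖v‖ ^ 2 * t := by
              rw [norm_smul, Real.norm_eq_abs, abs_of_nonneg (le_of_lt ht.1)]
              ring
      rw [inner_sub_left] at h4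
      linarith
  have h01 : ψ 0 ≤ ψ 1 := hmono (by norm_num) (by norm_num) (by norm_num)
  have hψ0 : ψ 0 = -g a := by simp [hψdef]
  have hψ1 : ψ 1 = Lg * ‖v‖ ^ 2 / 2 + ⟪gradg a, v⟫_ℝ - g b := by
    simp [hψdef, hv]
  rw [hψ0, hψ1] at h01
  linarith

/-- For CG-BiO iterates with constant stepsize `γ ∈ (0,1]`,
`g(x_k) − g(x_0) ≤ (1/2)L_g D² γ` for all `k`; moreover if `g(x_0) − g* ≤ ε_g/2`
and `γ ≤ ε_g/(L_g D²)`, then `g(x_k) − g* ≤ ε_g` for all `k`. -/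
theorem statement10 {d : ℕ} (Z : Set (EuclideanSpace ℝ (Fin d)))
    (hZne : Z.Nonempty) (hZcomp : IsCompact Z) (hZconv : Convex ℝ Z)
    (D : ℝ) (hD : ∀ x ∈ Z, ∀ y ∈ Z, ‖x - y‖ ≤ D)
    (f g : EuclideanSpace ℝ (Fin d) → ℝ)
    (gradf gradg : EuclideanSpace ℝ (Fin d) → EuclideanSpace ℝ (Fin d))
    (hfdiff : ∀ x, HasGradientAt f (gradf x) x)
    (hgconv : ConvexOn ℝ Set.univ g)
    (hgdiff : ∀ x, HasGradientAt g (gradg x) x)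
    (Lg : ℝ) (hLg : 0 ≤ Lg)
    (hgLip : ∀ x ∈ Z, ∀ y ∈ Z, ‖gradg x - gradg y‖ ≤ Lg * ‖x - y‖)
    (γ : ℝ) (hγ0 : 0 < γ) (hγ1 : γ ≤ 1)
    (εg : ℝ) (hεg : 0 < εg)
    (x s : ℕ → EuclideanSpace ℝ (Fin d))
    (hx0 : x 0 ∈ Z)
    (hsmem : ∀ k, s k ∈ Z ∧ ⟪gradg (x k), s k - x k⟫_ℝ ≤ g (x 0) - g (x k))
    (hsmin : ∀ k, ∀ s' ∈ Z, ⟪gradg (x k), s' - x k⟫_ℝ ≤ g (x 0) - g (x k) →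
      ⟪gradf (x k), s k⟫_ℝ ≤ ⟪gradf (x k), s'⟫_ℝ)
    (hupd : ∀ k, x (k + 1) = (1 - γ) • x k + γ • s k) :
    (∀ k : ℕ, g (x k) - g (x 0) ≤ (1/2) * Lg * D^2 * γ) ∧
      ((g (x 0) - sInf (g '' Z) ≤ εg / 2 ∧ γ ≤ εg / (Lg * D^2)) →
        ∀ k : ℕ, g (x k) - sInf (g '' Z) ≤ εg) := by
  obtain ⟨z0, hz0⟩ := hZne
  have hDnn : 0 ≤ D := by
    have := hD z0 hz0 z0 hz0
    simpa using this
  -- main induction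
  have main : ∀ k : ℕ, x k ∈ Z ∧ g (x k) - g (x 0) ≤ (1/2) * Lg * D^2 * γ := by
    intro k
    induction k with
    | zero =>
      refine ⟨hx0, ?_⟩
      have : (0:ℝ) ≤ (1/2) * Lg * D^2 * γ := by positivity
      linarith
    | succ k ih =>
      obtain ⟨hxk, hgk⟩ := ih
      have hsk : s k ∈ Z := (hsmem k).1
      have hxk1 : x (k+1) ∈ Z := by
        rw [hupd k]
        exact hZconv hxk hsk (by linarith) (le_of_lt hγ0) (by ring)
      refine ⟨hxk1, ?_⟩
      -- segment condition for the descent lemma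
      have hseg : ∀ t ∈ Set.Icc (0:ℝ) 1,
          x k + t • (x (k+1) - x k) ∈ Z := by
        intro t ht
        have : x k + t • (x (k+1) - x k) = (1 - t) • x k + t • x (k+1) := by
          module
        rw [this]
        exact hZconv hxk hxk1 (by linarith [ht.2]) ht.1 (by ring)
      have hdesc := descent_lemma_s10 g gradg hgdiff Lg (x k) (x (k+1))
        (fun t ht => by
          have hmem := hseg t ht
          have := hgLip _ hmem _ hxk
          simpa using this)
      have hdiff : x (k+1) - x k = γ • (s k - x k) := by
        rw [hupd k]; module
      have hinner : ⟪gradg (x k), x (k+1) - x k⟫_ℝ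
          ≤ γ * (g (x 0) - g (x k)) := by
        rw [hdiff, real_inner_smul_right]
        exact mul_le_mul_of_nonneg_left (hsmem k).2 (le_of_lt hγ0)
      have hnorm : ‖x (k+1) - x k‖ ≤ γ * D := by
        rw [hdiff, norm_smul, Real.norm_eq_abs, abs_of_pos hγ0]
        exact mul_le_mul_of_nonneg_left (by
          have := hD (s k) hsk (x k) hxk
          simpa using this) (le_of_lt hγ0)
      have hnorm2 : ‖x (k+1) - x k‖ ^ 2 ≤ γ^2 * D^2 := by
        have h := sq_le_sq' (by linarith [norm_nonneg (x (k+1) - x k)]) hnorm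
        calc ‖x (k+1) - x k‖ ^ 2 ≤ (γ * D)^2 := h
          _ = γ^2 * D^2 := by ring
      have key : g (x (k+1)) ≤ g (x k) + γ * (g (x 0) - g (x k))
          + Lg / 2 * (γ^2 * D^2) := by
        have h5 : Lg / 2 * ‖x (k+1) - x k‖ ^ 2 ≤ Lg / 2 * (γ^2 * D^2) :=
          mul_le_mul_of_nonneg_left hnorm2 (by linarith)
        linarith [hdesc, hinner]
      nlinarith [hgk, mul_le_mul_of_nonneg_left hgk (by linarith : (0:ℝ) ≤ 1 - γ)]
  refine ⟨fun k => (main k).2, ?_⟩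
  rintro ⟨h1, h2⟩ k
  have hLD : (0:ℝ) ≤ Lg * D^2 := by positivity
  have hkey : Lg * D^2 * γ ≤ εg := by
    rcases eq_or_lt_of_le hLD with h | h
    · rw [← h]; linarith
    · have := (le_div_iff₀ h).mp h2
      linarith [this]
  have hpart1 := (main k).2
  linarith
end

section
/- Suppose g satisfies the r-th-order Hölderian error bound with constant α > 0 and r ≥ 1, f is convex, and let M = max_{x∈X*_g} ‖∇f(x)‖. Then every x̂ ∈ Z with g(x̂) − g* ≤ ε_g satisfies f(x̂) − f* ≥ −M (r ε_g/α)^{1/r}, where f* = min_{s∈X*_g} f(s). -/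
open scoped InnerProductSpace

/-- First-order condition for a convex differentiable function. -/
lemma grad_convex_ineq {d : ℕ} {f : EuclideanSpace ℝ (Fin d) → ℝ}
    (hf : ConvexOn ℝ Set.univ f) {p s y : EuclideanSpace ℝ (Fin d)}
    (hg : HasGradientAt f p s) : ⟪p, y - s⟫_ℝ ≤ f y - f s := by
  set φ : ℝ → ℝ := fun t : ℝ => f (s + t • (y - s)) with hφdef
  have hc0 : HasDerivAt (fun t : ℝ => s + t • (y - s)) (y - s) 0 := by
    simpa using ((hasDerivAt_id (0 : ℝ)).smul_const (y - s)).const_add s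
  have hF : HasFDerivAt f (InnerProductSpace.toDual ℝ _ p) s := hg.hasFDerivAt
  have hF' : HasFDerivAt f (InnerProductSpace.toDual ℝ _ p)
      ((fun t : ℝ => s + t • (y - s)) 0) := by simpa using hF
  have hφd : HasDerivAt φ ⟪p, y - s⟫_ℝ 0 := by
    have := hF'.comp_hasDerivAt 0 hc0
    simp [hφdef, Function.comp, InnerProductSpace.toDual_apply_apply] at this
    exact this
  have hφconv : ConvexOn ℝ Set.univ φ := by
    have h := hf.comp_affineMap (AffineMap.lineMap s y)
    have he : φ = f ∘ (AffineMap.lineMap s y : ℝ →ᵃ[ℝ] EuclideanSpace ℝ (Fin d)) := by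
      funext t
      simp [hφdef, AffineMap.lineMap_apply, Function.comp, add_comm]
    rw [he]
    simpa using h
  have hs := hφconv.le_slope_of_hasDerivAt (Set.mem_univ (0 : ℝ))
    (Set.mem_univ (1 : ℝ)) one_pos hφd
  have : slope φ 0 1 = f y - f s := by
    simp [slope, hφdef]
  linarith [hs.trans_eq this]

/-- **Proposition 1(i).** Under the `r`-th-order Hölderian error bound on `g`
with constant `α > 0` and `r ≥ 1`, any `xhat ∈ Z` with `g(xhat) − g* ≤ ε_g` satisfies
`f(xhat) − f* ≥ −M (r ε_g/α)^{1/r}`, where `M = max_{x∈X*_g} ‖∇f(x)‖` and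
`f* = min_{s∈X*_g} f(s)`. -/
theorem statement12 {d : ℕ} (Z : Set (EuclideanSpace ℝ (Fin d)))
    (hZne : Z.Nonempty) (hZcomp : IsCompact Z) (hZconv : Convex ℝ Z)
    (f g : EuclideanSpace ℝ (Fin d) → ℝ)
    (gradf gradg : EuclideanSpace ℝ (Fin d) → EuclideanSpace ℝ (Fin d))
    (hfconv : ConvexOn ℝ Set.univ f)
    (hfdiff : ∀ x, HasGradientAt f (gradf x) x)
    (hgconv : ConvexOn ℝ Set.univ g)
    (hgdiff : ∀ x, HasGradientAt g (gradg x) x)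
    (α r : ℝ) (hα : 0 < α) (hr : 1 ≤ r)
    (hHEB : ∀ x ∈ Z,
      (α / r) * Metric.infDist x {z | z ∈ Z ∧ IsMinOn g Z z} ^ r ≤ g x - sInf (g '' Z))
    (M : ℝ) (hM : M = sSup ((fun x => ‖gradf x‖) '' {z | z ∈ Z ∧ IsMinOn g Z z}))
    (εg : ℝ) (hεg : 0 < εg)
    (xhat : EuclideanSpace ℝ (Fin d)) (hxhatZ : xhat ∈ Z)
    (hxhatg : g xhat - sInf (g '' Z) ≤ εg) :
    -M * (r * εg / α) ^ (1 / r) ≤ f xhat - sInf (f '' {z | z ∈ Z ∧ IsMinOn g Z z}) := by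
  have hr0 : (0:ℝ) < r := lt_of_lt_of_le one_pos hr
  set S : Set (EuclideanSpace ℝ (Fin d)) := {z | z ∈ Z ∧ IsMinOn g Z z} with hS
  have gcont : Continuous g :=
    Differentiable.continuous (fun x => ((hgdiff x).hasFDerivAt).differentiableAt)
  have fcont : Continuous f :=
    Differentiable.continuous (fun x => ((hfdiff x).hasFDerivAt).differentiableAt)
  obtain ⟨z0, hz0Z, hz0min⟩ := hZcomp.exists_isMinOn hZne gcont.continuousOn
  have hSne : S.Nonempty := ⟨z0, hz0Z, hz0min⟩
  have hSclosed : IsClosed S := by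
    have hrw : S = Z ∩ ⋂ y ∈ Z, {x | g x ≤ g y} := by
      ext x
      simp only [hS, Set.mem_setOf_eq, Set.mem_inter_iff, Set.mem_iInter, isMinOn_iff]
    rw [hrw]
    exact hZcomp.isClosed.inter
      (isClosed_biInter fun y _ => isClosed_le gcont continuous_const)
  have hScomp : IsCompact S :=
    IsCompact.of_isClosed_subset hZcomp hSclosed (fun x hx => hx.1)
  obtain ⟨s, hsS, hds⟩ := hScomp.exists_infDist_eq_dist hSne xhat
  set D := Metric.infDist xhat S with hD
  have hD0 : 0 ≤ D := Metric.infDist_nonneg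
  have h1 : (α / r) * D ^ r ≤ εg := (hHEB xhat hxhatZ).trans hxhatg
  have h2 : D ^ r ≤ r * εg / α := by
    rw [le_div_iff₀ hα]
    calc D ^ r * α = α / r * D ^ r * r := by field_simp
      _ ≤ εg * r := mul_le_mul_of_nonneg_right h1 hr0.le
      _ = r * εg := mul_comm _ _
  have h3 : D ≤ (r * εg / α) ^ (1 / r) := by
    have h4 := Real.rpow_le_rpow (Real.rpow_nonneg hD0 r) h2
      (by positivity : (0:ℝ) ≤ 1 / r)
    rw [one_div]
    rwa [one_div, Real.rpow_rpow_inv hD0 hr0.ne'] at h4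
  -- bound on gradients over S
  set T : Set (EuclideanSpace ℝ (Fin d)) :=
    (fun p : EuclideanSpace ℝ (Fin d) × EuclideanSpace ℝ (Fin d) => p.1 + p.2) ''
      (S ×ˢ Metric.closedBall 0 1) with hT
  have hTcomp : IsCompact T :=
    ((hScomp.prod (isCompact_closedBall (0 : EuclideanSpace ℝ (Fin d)) 1)).image
      (continuous_fst.add continuous_snd))
  obtain ⟨B, hB⟩ := (hTcomp.image fcont).bddAbove
  obtain ⟨b, hb⟩ := (hScomp.image fcont).bddBelow
  have hfxB : ∀ x ∈ S, ∀ u : EuclideanSpace ℝ (Fin d), ‖u‖ ≤ 1 → f (x + u) ≤ B := by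
    intro x hx u hu
    exact hB ⟨x + u, ⟨(x, u), ⟨hx, mem_closedBall_zero_iff.mpr hu⟩, rfl⟩, rfl⟩
  have hgradbound : ∀ x ∈ S, ‖gradf x‖ ≤ B - b := by
    intro x hx
    have hbx : b ≤ f x := hb ⟨x, hx, rfl⟩
    rcases eq_or_ne (gradf x) 0 with h0 | h0
    · have h5 := hfxB x hx 0 (by simp)
      rw [h0, norm_zero]
      simp only [add_zero] at h5
      linarith
    · have hne : ‖gradf x‖ ≠ 0 := norm_ne_zero_iff.mpr h0
      set u : EuclideanSpace ℝ (Fin d) := ‖gradf x‖⁻¹ • gradf x with hu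
      have hnu : ‖u‖ = 1 := by
        rw [hu, norm_smul, norm_inv, norm_norm, inv_mul_cancel₀ hne]
      have hkey := grad_convex_ineq hfconv (hfdiff x) (y := x + u)
      have hinner2 : ⟪gradf x, (x + u) - x⟫_ℝ = ‖gradf x‖ := by
        rw [add_sub_cancel_left, hu, real_inner_smul_right,
          real_inner_self_eq_norm_mul_norm, ← mul_assoc, inv_mul_cancel₀ hne, one_mul]
      rw [hinner2] at hkey
      linarith [hfxB x hx u hnu.le]
  have hBddA : BddAbove ((fun x => ‖gradf x‖) '' S) :=
    ⟨B - b, by rintro _ ⟨x, hx, rfl⟩; exact hgradbound x hx⟩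
  have hMs : ‖gradf s‖ ≤ M := hM ▸ le_csSup hBddA ⟨s, hsS, rfl⟩
  have hM0 : 0 ≤ M := le_trans (norm_nonneg _) hMs
  have hfstar : sInf (f '' S) ≤ f s := csInf_le (hScomp.image fcont).bddBelow ⟨s, hsS, rfl⟩
  have hkey := grad_convex_ineq hfconv (hfdiff s) (y := xhat)
  have hlow : -(‖gradf s‖ * ‖xhat - s‖) ≤ ⟪gradf s, xhat - s⟫_ℝ := by
    have h6 := real_inner_le_norm (-(gradf s)) (xhat - s)
    rw [inner_neg_left, norm_neg] at h6
    linarith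
  have hdist : ‖xhat - s‖ = D := by
    rw [hds, dist_eq_norm]
  have hfin : ‖gradf s‖ * ‖xhat - s‖ ≤ M * (r * εg / α) ^ (1 / r) := by
    rw [hdist]
    exact mul_le_mul hMs h3 hD0 hM0
  linarith
end

section
/- Suppose g satisfies the r-th-order Hölderian error bound with constant α > 0 and r ≥ 1, f has L_f-Lipschitz gradient, and let M = max_{x∈X*_g} ‖∇f(x)‖. Then every x̂ ∈ Z with g(x̂) − g* ≤ ε_g satisfies G(x̂) ≥ −M (r ε_g/α)^{1/r} − L_f (r ε_g/α)^{2/r}, where G(x) = max_{s∈X*_g} ⟨∇f(x), x − s⟩ is the Frank–Wolfe gap. -/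
open scoped InnerProductSpace

/-- **Proposition 1(ii).** Under the `r`-th-order Hölderian error bound on `g`
with constant `α > 0` and `r ≥ 1`, if `f` has `L_f`-Lipschitz gradient, then any `x̂ ∈ Z`
with `g(x̂) − g* ≤ ε_g` satisfies
`G(x̂) ≥ −M (r ε_g/α)^{1/r} − L_f (r ε_g/α)^{2/r}`, where
`M = max_{x∈X*_g} ‖∇f(x)‖` and `G(x) = max_{s∈X*_g} ⟨∇f(x), x − s⟩`. -/
theorem statement13 {d : ℕ} (Z : Set (EuclideanSpace ℝ (Fin d)))
    (hZne : Z.Nonempty) (hZcomp : IsCompact Z) (hZconv : Convex ℝ Z)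
    (f g : EuclideanSpace ℝ (Fin d) → ℝ)
    (gradf gradg : EuclideanSpace ℝ (Fin d) → EuclideanSpace ℝ (Fin d))
    (hfdiff : ∀ x, HasGradientAt f (gradf x) x)
    (Lf : ℝ) (hLf : 0 ≤ Lf)
    (hfLip : ∀ x y, ‖gradf x - gradf y‖ ≤ Lf * ‖x - y‖)
    (hgconv : ConvexOn ℝ Set.univ g)
    (hgdiff : ∀ x, HasGradientAt g (gradg x) x)
    (α r : ℝ) (hα : 0 < α) (hr : 1 ≤ r)
    (hHEB : ∀ x ∈ Z,
      (α / r) * Metric.infDist x {z | z ∈ Z ∧ IsMinOn g Z z} ^ r ≤ g x - sInf (g '' Z))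
    (M : ℝ) (hM : M = sSup ((fun x => ‖gradf x‖) '' {z | z ∈ Z ∧ IsMinOn g Z z}))
    (εg : ℝ) (hεg : 0 < εg)
    (xhat : EuclideanSpace ℝ (Fin d)) (hxhatZ : xhat ∈ Z)
    (hxhatg : g xhat - sInf (g '' Z) ≤ εg) :
    -M * (r * εg / α) ^ (1 / r) - Lf * (r * εg / α) ^ (2 / r) ≤
      sSup ((fun s => ⟪gradf xhat, xhat - s⟫_ℝ) '' {z | z ∈ Z ∧ IsMinOn g Z z}) := by
  have hr0 : (0:ℝ) < r := lt_of_lt_of_le zero_lt_one hr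
  set Xs : Set (EuclideanSpace ℝ (Fin d)) := {z | z ∈ Z ∧ IsMinOn g Z z} with hXsdef
  have hgcont : Continuous g :=
    continuous_iff_continuousAt.mpr fun x => (hgdiff x).differentiableAt.continuousAt
  -- gradf is continuous
  have hgradfcont : Continuous gradf := by
    have : LipschitzWith (Real.toNNReal Lf) gradf := by
      apply LipschitzWith.of_dist_le_mul
      intro x y
      rw [dist_eq_norm, dist_eq_norm]
      calc ‖gradf x - gradf y‖ ≤ Lf * ‖x - y‖ := hfLip x y
        _ = (Real.toNNReal Lf : ℝ) * ‖x - y‖ := by rw [Real.coe_toNNReal Lf hLf]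
    exact this.continuous
  -- Xs compact nonempty
  have hXseq : Xs = Z ∩ ⋂ y ∈ Z, {z | g z ≤ g y} := by
    ext z
    simp only [hXsdef, Set.mem_setOf_eq, Set.mem_inter_iff, Set.mem_iInter, isMinOn_iff]
  have hXsclosed_part : IsClosed (⋂ y ∈ Z, {z : EuclideanSpace ℝ (Fin d) | g z ≤ g y}) :=
    isClosed_biInter fun y _ => isClosed_le hgcont continuous_const
  have hXscomp : IsCompact Xs := by
    rw [hXseq]; exact hZcomp.inter_right hXsclosed_part
  have hXsne : Xs.Nonempty := by
    obtain ⟨x0, hx0Z, hx0min⟩ := hZcomp.exists_isMinOn hZne hgcont.continuousOn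
    exact ⟨x0, hx0Z, hx0min⟩
  -- constants
  have hbase : (0:ℝ) < r * εg / α := by positivity
  set δ : ℝ := (r * εg / α) ^ (1 / r) with hδdef
  have hδ0 : 0 ≤ δ := Real.rpow_nonneg hbase.le _
  set D : ℝ := Metric.infDist xhat Xs with hDdef
  have hD0 : 0 ≤ D := Metric.infDist_nonneg
  -- D^r ≤ r εg / α
  have hDr : D ^ r ≤ r * εg / α := by
    have h1 := (hHEB xhat hxhatZ).trans hxhatg
    rw [div_mul_eq_mul_div, div_le_iff₀ hr0] at h1
    simp only [← hDdef] at h1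
    rw [le_div_iff₀ hα]
    nlinarith
  have hDδ : D ≤ δ := by
    have h1 : (D ^ r) ^ (1 / r) ≤ (r * εg / α) ^ (1 / r) :=
      Real.rpow_le_rpow (Real.rpow_nonneg hD0 r) hDr (by positivity)
    rw [one_div, Real.rpow_rpow_inv hD0 hr0.ne'] at h1
    rw [hδdef, one_div]
    exact h1
  -- nearest point
  obtain ⟨xs, hxsXs, hxsdist⟩ := hXscomp.exists_infDist_eq_dist hXsne xhat
  have hnorm : ‖xhat - xs‖ = D := by
    rw [hDdef, hxsdist, dist_eq_norm]
  -- M bound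
  have hMbdd : BddAbove ((fun x => ‖gradf x‖) '' Xs) :=
    (hXscomp.image (continuous_norm.comp hgradfcont)).bddAbove
  have hMge : ‖gradf xs‖ ≤ M := by
    rw [hM]; exact le_csSup hMbdd ⟨xs, hxsXs, rfl⟩
  have hM0 : 0 ≤ M := le_trans (norm_nonneg _) hMge
  -- sSup lower bound
  have hGbdd : BddAbove ((fun s => ⟪gradf xhat, xhat - s⟫_ℝ) '' Xs) := by
    refine (hXscomp.image ?_).bddAbove
    exact (continuous_const.inner (continuous_const.sub continuous_id))
  have hGge : ⟪gradf xhat, xhat - xs⟫_ℝ ≤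
      sSup ((fun s => ⟪gradf xhat, xhat - s⟫_ℝ) '' Xs) :=
    le_csSup hGbdd ⟨xs, hxsXs, rfl⟩
  -- inner product bounds
  have hsplit : ⟪gradf xhat, xhat - xs⟫_ℝ
      = ⟪gradf xs, xhat - xs⟫_ℝ + ⟪gradf xhat - gradf xs, xhat - xs⟫_ℝ := by
    rw [inner_sub_left]; ring
  have h1 : -(‖gradf xs‖ * ‖xhat - xs‖) ≤ ⟪gradf xs, xhat - xs⟫_ℝ :=
    neg_le_of_abs_le (abs_real_inner_le_norm _ _) |>.trans_eq rfl
  have h2 : -(‖gradf xhat - gradf xs‖ * ‖xhat - xs‖) ≤ ⟪gradf xhat - gradf xs, xhat - xs⟫_ℝ :=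
    neg_le_of_abs_le (abs_real_inner_le_norm _ _)
  have hlip : ‖gradf xhat - gradf xs‖ ≤ Lf * D := by
    rw [← hnorm]; exact hfLip xhat xs
  -- δ² identity
  have hδ2 : (r * εg / α) ^ (2 / r) = δ * δ := by
    rw [hδdef, ← Real.rpow_add hbase]
    congr 1
    ring
  rw [hδ2]
  refine le_trans ?_ hGge
  rw [hsplit, hnorm] at *
  nlinarith [mul_nonneg hM0 (sub_nonneg.mpr hDδ), mul_nonneg hLf
    (mul_nonneg (sub_nonneg.mpr hDδ) hD0), mul_nonneg hLf (mul_nonneg hδ0 (sub_nonneg.mpr hDδ)),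
    mul_nonneg (norm_nonneg (gradf xhat - gradf xs)) hD0, mul_le_mul_of_nonneg_right hMge hD0,
    mul_le_mul_of_nonneg_right hlip hD0]
end
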